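/- Proposition 1(III), necessity direction: Let G be a finite simple connected graph on vertex set V, λ ∈ ℕ, 𝒩(λ) the family of λ-cut remainder sets of G, n_u ∈ ℕ an upper bound on the number of connected components obtained by deleting at most λ edges from G, and r ≥ 0. Let c : V → ℝ satisfy Σ_{v∈V} c(v) = 0 and |Σ_{v∈N} c(v)| ≤ r for every N ∈ 𝒩(λ). Call a spanning subgraph H of G W(λ)-disconnected if H is disconnected, H has at most n_u connected components, and the vertex set of every connected component of H either belongs to 𝒩(λ) or is the complement in V of a member of 𝒩(λ). If a spanning subgraph H of G is connected or W(λ)-disconnected, then val(H, c) ≤ n_u · r. -/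

import Mathlib

open Matrix
open scoped Classical

/-- The optimal value `val(H, c)` of the connectedness LP: minimize `Σ (d₊ + d₋)` over
`θ, d₊, d₋ : V → ℝ` subject to `d₊ ≥ 0`, `d₋ ≥ 0` and `L_H θ = c + d₊ − d₋`. -/
noncomputable def lpVal {V : Type} [Fintype V] [DecidableEq V]
    (H : SimpleGraph V) (c : V → ℝ) : ℝ :=
  sInf {x : ℝ | ∃ θ dp dm : V → ℝ, (∀ v, 0 ≤ dp v) ∧ (∀ v, 0 ≤ dm v) ∧
    H.lapMatrix ℝ *ᵥ θ = c + dp - dm ∧ x = ∑ v, (dp v + dm v)}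

/-- `N ⊊ V` is a *λ-cut remainder set* of `G` if deleting some set `L` of at most `λ` edges of
`G` leaves a disconnected graph in which `V ∖ N` is a connected component of maximum
cardinality. -/
def IsLamCutRemainder {V : Type} [Fintype V] (G : SimpleGraph V) (lam : ℕ)
    (N : Set V) : Prop :=
  N ≠ Set.univ ∧
    ∃ L : Set (Sym2 V), L ⊆ G.edgeSet ∧ L.ncard ≤ lam ∧
      ¬ (G.deleteEdges L).Connected ∧
      ∃ C : (G.deleteEdges L).ConnectedComponent, C.supp = Nᶜ ∧
        ∀ C' : (G.deleteEdges L).ConnectedComponent, C'.supp.ncard ≤ C.supp.ncard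



lemma lap_solvable {V : Type} [Fintype V] [DecidableEq V] (H : SimpleGraph V) (b : V → ℝ)
    (hb : ∀ C : H.ConnectedComponent, ∑ v ∈ C.supp.toFinset, b v = 0) :
    ∃ θ : V → ℝ, H.lapMatrix ℝ *ᵥ θ = b := by
  classical
  let T : EuclideanSpace ℝ V →ₗ[ℝ] EuclideanSpace ℝ V := Matrix.toEuclideanLin (H.lapMatrix ℝ)
  have hinner : ∀ x y : EuclideanSpace ℝ V, (inner ℝ x y : ℝ) = ∑ v, x v * y v := by
    intro x y
    rw [EuclideanSpace.inner_eq_star_dotProduct]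
    simp [dotProduct, mul_comm]
  have hTapp : ∀ (x : EuclideanSpace ℝ V) (v : V),
      T x v = (H.lapMatrix ℝ *ᵥ x) v := by
    intro x v
    rfl
  have hsym : ∀ x y : EuclideanSpace ℝ V, (inner ℝ (T x) y : ℝ) = (inner ℝ x (T y) : ℝ) := by
    intro x y
    rw [hinner, hinner]
    have h1 : ∑ v, T x v * y v = (H.lapMatrix ℝ *ᵥ x) ⬝ᵥ y := by
      simp [dotProduct, hTapp]
    have h2 : ∑ v, x v * T y v = x ⬝ᵥ (H.lapMatrix ℝ *ᵥ y) := by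
      simp [dotProduct, hTapp]
    rw [h1, h2, Matrix.dotProduct_mulVec, ← Matrix.mulVec_transpose,
      (H.isSymm_lapMatrix (R := ℝ) : _ᵀ = _)]
  have hrange : (LinearMap.ker T)ᗮ ≤ LinearMap.range T := by
    have hle : LinearMap.range T ≤ (LinearMap.ker T)ᗮ := by
      rintro _ ⟨x, rfl⟩
      rw [Submodule.mem_orthogonal]
      intro z hz
      rw [← hsym]
      rw [LinearMap.mem_ker.mp hz, hinner]
      simp
    have h1 := Submodule.finrank_add_finrank_orthogonal (K := LinearMap.ker T)
    have h2 := LinearMap.finrank_range_add_finrank_ker T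
    have h3 : Module.finrank ℝ (LinearMap.ker T)ᗮ ≤ Module.finrank ℝ (LinearMap.range T) := by
      omega
    exact le_of_eq (Submodule.eq_of_le_of_finrank_le hle h3).symm
  set b' : EuclideanSpace ℝ V := WithLp.toLp 2 b with hb'
  have hbmem : b' ∈ (LinearMap.ker T)ᗮ := by
    rw [Submodule.mem_orthogonal]
    intro z hz
    have hz0 : Matrix.toLin' (H.lapMatrix ℝ) (fun v => z v) = 0 := by
      funext v
      have := congrArg (fun w : EuclideanSpace ℝ V => w v) (LinearMap.mem_ker.mp hz)
      exact this
    have hconst : ∀ i j, H.Reachable i j → z i = z j :=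
      (SimpleGraph.lapMatrix_mulVec_eq_zero_iff_forall_reachable H
        (x := fun v => z v)).mp hz0
    rw [hinner]
    show ∑ v, z v * b v = 0
    rw [← Finset.sum_fiberwise_of_maps_to (g := fun v => H.connectedComponentMk v)
      (fun i _ => Finset.mem_univ _) (fun v => z v * b v)]
    refine Finset.sum_eq_zero fun C _ => ?_
    have hrw : ∀ v ∈ Finset.univ.filter (fun v => H.connectedComponentMk v = C),
        z v * b v = z C.out * b v := by
      intro v hv
      simp only [Finset.mem_filter] at hv
      have : H.Reachable v C.out := by
        have h1 : H.connectedComponentMk C.out = C := C.out_eq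
        exact SimpleGraph.ConnectedComponent.exact (hv.2.trans h1.symm)
      rw [hconst v C.out this]
    calc ∑ v ∈ Finset.univ.filter (fun v => H.connectedComponentMk v = C), z v * b v
        = ∑ v ∈ Finset.univ.filter (fun v => H.connectedComponentMk v = C), z C.out * b v :=
          Finset.sum_congr rfl hrw
      _ = z C.out * ∑ v ∈ Finset.univ.filter (fun v => H.connectedComponentMk v = C), b v := by
          rw [Finset.mul_sum]
      _ = 0 := by
          have : Finset.univ.filter (fun v => H.connectedComponentMk v = C)
              = C.supp.toFinset := by
            ext v; simp [SimpleGraph.ConnectedComponent.mem_supp_iff]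
          rw [this, hb C, mul_zero]
  obtain ⟨θ, hθ⟩ := hrange hbmem
  refine ⟨θ, ?_⟩
  funext v
  have := congrFun (congrArg WithLp.ofLp hθ) v
  simpa [hTapp, hb'] using this



open Matrix
open scoped Classical

lemma lpVal_le_sum_abs {V : Type} [Fintype V] [DecidableEq V]
    (H : SimpleGraph V) (c : V → ℝ)
    (lapsolv : ∀ b : V → ℝ, (∀ C : H.ConnectedComponent, ∑ v ∈ C.supp.toFinset, b v = 0) →
      ∃ θ : V → ℝ, H.lapMatrix ℝ *ᵥ θ = b) :
    lpVal H c ≤ ∑ C : H.ConnectedComponent, |∑ v ∈ C.supp.toFinset, c v| := by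
  classical
  set s : H.ConnectedComponent → ℝ := fun C => ∑ v ∈ C.supp.toFinset, c v with hs
  set dp : V → ℝ := fun v =>
    if (H.connectedComponentMk v).out = v then max (-(s (H.connectedComponentMk v))) 0 else 0
    with hdp
  set dm : V → ℝ := fun v =>
    if (H.connectedComponentMk v).out = v then max (s (H.connectedComponentMk v)) 0 else 0
    with hdm
  have hdp0 : ∀ v, 0 ≤ dp v := by intro v; simp only [hdp]; split <;> simp [le_max_right]
  have hdm0 : ∀ v, 0 ≤ dm v := by intro v; simp only [hdm]; split <;> simp [le_max_right]
  -- component sums of b := c + dp - dm vanish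
  have hfil : ∀ C : H.ConnectedComponent,
      C.supp.toFinset = Finset.univ.filter (fun v => H.connectedComponentMk v = C) := by
    intro C; ext v; simp [SimpleGraph.ConnectedComponent.mem_supp_iff]
  have hmk : ∀ C : H.ConnectedComponent, H.connectedComponentMk C.out = C :=
    fun C => C.out_eq
  have houtmem : ∀ C : H.ConnectedComponent, C.out ∈ C.supp.toFinset := by
    intro C; rw [hfil]; simpa using hmk C
  have hsumdp : ∀ C : H.ConnectedComponent,
      ∑ v ∈ C.supp.toFinset, dp v = max (-(s C)) 0 := by
    intro C
    rw [Finset.sum_eq_single_of_mem C.out (houtmem C)]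
    · simp [hdp, hmk C]
    · intro v hv hne
      rw [hfil] at hv
      simp only [Finset.mem_filter] at hv
      simp [hdp, hv.2, Ne.symm hne]
  have hsumdm : ∀ C : H.ConnectedComponent,
      ∑ v ∈ C.supp.toFinset, dm v = max (s C) 0 := by
    intro C
    rw [Finset.sum_eq_single_of_mem C.out (houtmem C)]
    · simp [hdm, hmk C]
    · intro v hv hne
      rw [hfil] at hv
      simp only [Finset.mem_filter] at hv
      simp [hdm, hv.2, Ne.symm hne]
  obtain ⟨θ, hθ⟩ := lapsolv (c + dp - dm) (by
    intro C
    have : ∑ v ∈ C.supp.toFinset, (c + dp - dm) v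
        = s C + (∑ v ∈ C.supp.toFinset, dp v) - ∑ v ∈ C.supp.toFinset, dm v := by
      simp only [Pi.add_apply, Pi.sub_apply, Finset.sum_sub_distrib, Finset.sum_add_distrib, hs]
    rw [this, hsumdp, hsumdm]
    rcases le_total (s C) 0 with h | h
    · rw [max_eq_left (by linarith), max_eq_right h]; ring
    · rw [max_eq_right (by linarith), max_eq_left h]; ring)
  have hmem : (∑ v, (dp v + dm v)) ∈ {x : ℝ | ∃ θ dp dm : V → ℝ,
      (∀ v, 0 ≤ dp v) ∧ (∀ v, 0 ≤ dm v) ∧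
      H.lapMatrix ℝ *ᵥ θ = c + dp - dm ∧ x = ∑ v, (dp v + dm v)} :=
    ⟨θ, dp, dm, hdp0, hdm0, hθ, rfl⟩
  have hbdd : BddBelow {x : ℝ | ∃ θ dp dm : V → ℝ,
      (∀ v, 0 ≤ dp v) ∧ (∀ v, 0 ≤ dm v) ∧
      H.lapMatrix ℝ *ᵥ θ = c + dp - dm ∧ x = ∑ v, (dp v + dm v)} := by
    refine ⟨0, ?_⟩
    rintro x ⟨θ, dp', dm', h1, h2, _, rfl⟩
    exact Finset.sum_nonneg fun v _ => add_nonneg (h1 v) (h2 v)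
  have hval : lpVal H c ≤ ∑ v, (dp v + dm v) := csInf_le hbdd hmem
  refine hval.trans (le_of_eq ?_)
  have hpart : ∑ v, (dp v + dm v)
      = ∑ C : H.ConnectedComponent, ∑ v ∈ C.supp.toFinset, (dp v + dm v) := by
    rw [← Finset.sum_fiberwise_of_maps_to (g := fun v => H.connectedComponentMk v)
      (fun i _ => Finset.mem_univ _) (fun v => dp v + dm v)]
    exact Finset.sum_congr rfl fun C _ => by rw [hfil]
  rw [hpart]
  refine Finset.sum_congr rfl fun C _ => ?_
  rw [Finset.sum_add_distrib, hsumdp, hsumdm]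
  rcases le_total (s C) 0 with h | h
  · rw [max_eq_left (by linarith), max_eq_right h, abs_of_nonpos h]; ring
  · rw [max_eq_right (by linarith), max_eq_left h, abs_of_nonneg h]; ring

set_option maxHeartbeats 1000000 in
/-- **Proposition 1(III), necessity.** Let `G` be a finite simple connected graph,
`n_u` an upper bound on the number of connected components obtainable by deleting at most `λ`
edges from `G`, `r ≥ 0`, and `c : V → ℝ` with zero sum and `|Σ_{v ∈ N} c v| ≤ r` for every
λ-cut remainder set `N`. If a spanning subgraph `H ≤ G` is connected or W(λ)-disconnected
(disconnected, with at most `n_u` components, every component's vertex set being a λ-cut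
remainder set or the complement of one), then `val(H, c) ≤ n_u · r`. -/
theorem prop1_III_necessity
    {V : Type} [Fintype V] [DecidableEq V]
    (G : SimpleGraph V) (hG : G.Connected) (lam : ℕ) (nu : ℕ) (r : ℝ) (hr : 0 ≤ r)
    (hnu : ∀ L : Set (Sym2 V), L ⊆ G.edgeSet → L.ncard ≤ lam →
      Nat.card (G.deleteEdges L).ConnectedComponent ≤ nu)
    (c : V → ℝ) (hsum : ∑ v, c v = 0)
    (hcr : ∀ N : Set V, IsLamCutRemainder G lam N → |∑ v ∈ N.toFinset, c v| ≤ r)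
    (H : SimpleGraph V) (hHG : H ≤ G)
    (hH : H.Connected ∨
      (¬ H.Connected ∧ Nat.card H.ConnectedComponent ≤ nu ∧
        ∀ C : H.ConnectedComponent,
          IsLamCutRemainder G lam C.supp ∨ IsLamCutRemainder G lam C.suppᶜ)) :
    lpVal H c ≤ (nu : ℝ) * r := by
  classical
  have key := lpVal_le_sum_abs H c (fun b hb => lap_solvable H b hb)
  refine key.trans ?_
  have hfil : ∀ (C : H.ConnectedComponent) (i : Fintype ↥C.supp),
      @Set.toFinset V C.supp i = Finset.univ.filter (fun v => H.connectedComponentMk v = C) := by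
    intro C i
    ext v
    simp [SimpleGraph.ConnectedComponent.mem_supp_iff]
  have hfilc : ∀ (C : H.ConnectedComponent) (i : Fintype ↥(C.suppᶜ)),
      @Set.toFinset V (C.suppᶜ) i
        = (Finset.univ.filter (fun v => H.connectedComponentMk v = C))ᶜ := by
    intro C i
    ext v
    simp [SimpleGraph.ConnectedComponent.mem_supp_iff]
  rcases hH with hconn | ⟨hdisc, hcard, hcomp⟩
  · -- connected case: every component sum is the total sum = 0
    have hzero : ∀ C : H.ConnectedComponent, |∑ v ∈ C.supp.toFinset, c v| = 0 := by
      intro C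
      have huniv : C.supp.toFinset = Finset.univ := by
        rw [hfil]
        ext v
        simp only [Finset.mem_univ, iff_true, Finset.mem_filter, true_and]
        have hreach : H.Reachable v C.out := hconn.preconnected v C.out
        have h1 : H.connectedComponentMk C.out = C := C.out_eq
        rw [← h1]
        exact SimpleGraph.ConnectedComponent.sound hreach
      rw [huniv, hsum, abs_zero]
    rw [Finset.sum_congr rfl (fun C _ => hzero C), Finset.sum_const, smul_zero]
    positivity
  · -- disconnected case
    have hle : ∀ C : H.ConnectedComponent, |∑ v ∈ C.supp.toFinset, c v| ≤ r := by
      intro C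
      rw [hfil]
      rcases hcomp C with hC | hC
      · have h1 := hcr _ hC
        rwa [hfil] at h1
      · have h1 := hcr _ hC
        rw [hfilc] at h1
        set F := Finset.univ.filter (fun v => H.connectedComponentMk v = C) with hF
        have h3 : ∑ v ∈ F, c v + ∑ v ∈ Fᶜ, c v = ∑ v, c v := Finset.sum_add_sum_compl F c
        rw [hsum] at h3
        rw [show (∑ v ∈ F, c v) = -(∑ v ∈ Fᶜ, c v) by linarith, abs_neg]
        exact h1
    calc ∑ C : H.ConnectedComponent, |∑ v ∈ C.supp.toFinset, c v|
        ≤ ∑ _C : H.ConnectedComponent, r := Finset.sum_le_sum fun C _ => hle C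
      _ = (Fintype.card H.ConnectedComponent : ℝ) * r := by
          rw [Finset.sum_const, nsmul_eq_mul, Finset.card_univ]
      _ ≤ (nu : ℝ) * r := by
          refine mul_le_mul_of_nonneg_right ?_ hr
          have hc : Nat.card H.ConnectedComponent = Fintype.card H.ConnectedComponent :=
            Nat.card_eq_fintype_card
          rw [← hc]
          exact_mod_cast hcard
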